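/- Let g be a real nilpotent Lie algebra in which all abelian ideals are central. Then g is abelian, i.e. [g,g] = 0. -/

import Mathlib

/-- A real nilpotent Lie algebra in which all abelian ideals are central
is abelian. -/
theorem nilpotent_with_abelian_ideals_central_is_abelian
    {g : Type*} [LieRing g] [LieAlgebra ℝ g]
    (hnilp : ∃ k : ℕ, LieModule.lowerCentralSeries ℝ g g k = ⊥)
    (habelian : ∀ I : LieIdeal ℝ g, (∀ a ∈ I, ∀ b ∈ I, ⁅a, b⁆ = (0 : g)) →
      I ≤ LieAlgebra.center ℝ g) :
    ∀ x y : g, ⁅x, y⁆ = 0 := by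
  set z : LieIdeal ℝ g := LieAlgebra.center ℝ g with hz
  -- It suffices to show the center is everything.
  suffices htop : ∀ v : g, v ∈ z by
    intro x y
    exact (htop y) x
  by_contra hne
  push_neg at hne
  obtain ⟨w, hw⟩ := hne
  -- The quotient g ⧸ z is a nontrivial nilpotent g-module.
  haveI : LieModule.IsNilpotent g (g ⧸ z) := by
    rw [LieModule.isNilpotent_quotient_iff (R := ℝ)]
    obtain ⟨k, hk⟩ := hnilp
    exact ⟨k, hk ▸ bot_le⟩
  haveI : Nontrivial (g ⧸ z) := by
    refine ⟨LieSubmodule.Quotient.mk' z w, 0, ?_⟩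
    intro h
    apply hw
    exact (LieSubmodule.Quotient.mk_eq_zero z).mp h
  -- Hence it has a nonzero invariant vector: pick x ∉ z with ⁅y, x⁆ ∈ z for all y.
  haveI := LieModule.nontrivial_max_triv_of_isNilpotent ℝ g (g ⧸ z)
  obtain ⟨m, hm0⟩ := exists_ne (0 : LieModule.maxTrivSubmodule ℝ g (g ⧸ z))
  obtain ⟨x, hx⟩ := LieSubmodule.Quotient.surjective_mk' z (m : g ⧸ z)
  have hxz : x ∉ z := by
    intro hxz
    apply hm0
    ext
    rw [← hx]
    exact (LieSubmodule.Quotient.mk_eq_zero z).mpr hxz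
  have hbr : ∀ y : g, ⁅y, x⁆ ∈ z := by
    intro y
    have h1 := m.2 y
    rw [← hx] at h1
    have h2 : LieSubmodule.Quotient.mk' z ⁅y, x⁆ = 0 := by
      rw [← h1]; rfl
    exact (LieSubmodule.Quotient.mk_eq_zero z).mp h2
  -- Consider the ideal z ⊔ ℝ∙x.
  have hmemz : ∀ c ∈ z, ∀ y : g, ⁅y, c⁆ = 0 := by
    intro c hc y
    exact (LieModule.mem_maxTrivSubmodule ℝ g g c).mp hc y
  let S : Submodule ℝ g := z.toSubmodule ⊔ Submodule.span ℝ {x}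
  have hSdecomp : ∀ v ∈ S, ∃ c ∈ z, ∃ t : ℝ, v = c + t • x := by
    intro v hv
    obtain ⟨c, hc, s, hs, rfl⟩ := Submodule.mem_sup.mp hv
    obtain ⟨t, rfl⟩ := Submodule.mem_span_singleton.mp hs
    exact ⟨c, hc, t, rfl⟩
  let I : LieIdeal ℝ g :=
    { S with
      lie_mem := by
        intro y v hv
        obtain ⟨c, hc, t, rfl⟩ := hSdecomp v hv
        have h3 : ⁅y, c + t • x⁆ = ⁅y, c⁆ + t • ⁅y, x⁆ := by
          rw [lie_add, lie_smul]
        rw [h3, hmemz c hc y, zero_add]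
        exact Submodule.mem_sup_left (z.toSubmodule.smul_mem t (hbr y)) }
  have hIab : ∀ a ∈ I, ∀ b ∈ I, ⁅a, b⁆ = (0 : g) := by
    intro a ha b hb
    obtain ⟨c, hc, t, rfl⟩ := hSdecomp a ha
    obtain ⟨c', hc', t', rfl⟩ := hSdecomp b hb
    have h1 : ⁅c, c' + t' • x⁆ = 0 := by
      rw [← lie_skew, hmemz c hc, neg_zero]
    have h2 : ⁅x, c' + t' • x⁆ = 0 := by
      rw [lie_add, lie_smul, hmemz c' hc' x, lie_self, smul_zero, add_zero]
    rw [add_lie, smul_lie, h1, h2, smul_zero, add_zero]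
  have hIle := habelian I hIab
  apply hxz
  exact hIle (Submodule.mem_sup_right (Submodule.mem_span_singleton_self x))
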